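/- Every edge of the hypercube Q_n (n ≥ 2) lies on a cycle of every even length l with 4 ≤ l ≤ 2^n. -/

import Mathlib

open SimpleGraph

/-- The `n`-dimensional hypercube: vertices are binary strings of length `n`
(indexed so that bit `i+1` of the paper is index `i`), adjacent iff they
differ in exactly one bit. -/
def hypercube (n : ℕ) : SimpleGraph (Fin n → Bool) where
  Adj u v := ∃! i, u i ≠ v i
  symm := ⟨by
    rintro u v ⟨i, hi, hu⟩
    exact ⟨i, hi.symm, fun j hj => hu j hj.symm⟩⟩
  loopless := ⟨by
    rintro u ⟨i, hi, -⟩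
    exact hi rfl⟩

/-- Skip relation: `u` and `v` differ exactly in the last `k` bits
(indices `0, …, k-1`). -/
def skipRel (n k : ℕ) (u v : Fin n → Bool) : Prop :=
  u ≠ v ∧ ∀ i : Fin n, (i.val < k → u i ≠ v i) ∧ (k ≤ i.val → u i = v i)

/-- The enhanced hypercube `Q_{n,k}`: hypercube edges together with skip edges. -/
def enhanced (n k : ℕ) : SimpleGraph (Fin n → Bool) where
  Adj u v := (hypercube n).Adj u v ∨ skipRel n k u v
  symm := ⟨by
    rintro u v (h | ⟨hne, h⟩)
    · exact Or.inl ((hypercube n).adj_symm h)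
    · exact Or.inr ⟨hne.symm, fun i =>
        ⟨fun hi => ((h i).1 hi).symm, fun hi => ((h i).2 hi).symm⟩⟩⟩
  loopless := ⟨by
    rintro u (h | ⟨hne, -⟩)
    · exact (hypercube n).irrefl h
    · exact hne rfl⟩

/-- The folded hypercube `FQ_n`: hypercube edges together with complementary edges. -/
def folded (n : ℕ) : SimpleGraph (Fin n → Bool) where
  Adj u v := (hypercube n).Adj u v ∨ (u ≠ v ∧ ∀ i, u i ≠ v i)
  symm := ⟨by
    rintro u v (h | ⟨hne, h⟩)
    · exact Or.inl ((hypercube n).adj_symm h)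
    · exact Or.inr ⟨hne.symm, fun i => (h i).symm⟩⟩
  loopless := ⟨by
    rintro u (h | ⟨hne, -⟩)
    · exact (hypercube n).irrefl h
    · exact hne rfl⟩

/-- The Cartesian product `K₂ × G`: two copies of `G` joined by crossing edges. -/
def K2Prod {V : Type*} (G : SimpleGraph V) : SimpleGraph (Bool × V) :=
  (completeGraph Bool) □ G

/-- The edge `e` lies on a cycle of length `l` in `G`. -/
def EdgeOnCycle {V : Type*} (G : SimpleGraph V) (e : Sym2 V) (l : ℕ) : Prop :=
  ∃ (v : V) (c : G.Walk v v), c.IsCycle ∧ c.length = l ∧ e ∈ c.edges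


def grayNat (j : ℕ) : ℕ := j ^^^ j / 2

lemma xor_div_two (a b : ℕ) : (a ^^^ b) / 2 = a / 2 ^^^ b / 2 := by
  apply Nat.eq_of_testBit_eq; intro i
  rw [Nat.testBit_div_two, Nat.testBit_xor, Nat.testBit_xor,
    Nat.testBit_div_two, Nat.testBit_div_two]

lemma grayNat_xor (a b : ℕ) : grayNat a ^^^ grayNat b = grayNat (a ^^^ b) := by
  apply Nat.eq_of_testBit_eq; intro i
  simp only [grayNat, Nat.testBit_xor, xor_div_two]
  cases a.testBit i <;> cases b.testBit i <;>
    cases (a/2).testBit i <;> cases (b/2).testBit i <;> rfl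

lemma grayNat_lt {k j : ℕ} (h : j < 2^k) : grayNat j < 2^k :=
  Nat.xor_lt_two_pow h (lt_of_le_of_lt (Nat.div_le_self j 2) h)

lemma grayNat_injAux : ∀ N j j', j + j' ≤ N → grayNat j = grayNat j' → j = j' := by
  intro N
  induction N with
  | zero => intro j j' h _; omega
  | succ N ih =>
    intro j j' hs h
    rcases Nat.eq_zero_or_pos (j + j') with h0 | hpos
    · omega
    have h2 : grayNat (j / 2) = grayNat (j' / 2) := by
      have := congrArg (· / 2) h
      simp only [grayNat, xor_div_two, Nat.div_div_eq_div_mul] at this ⊢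
      exact this
    have hj2 : j / 2 = j' / 2 := ih _ _ (by omega) h2
    have h3 : j ^^^ j / 2 = j' ^^^ j / 2 := by
      show grayNat j = j' ^^^ j / 2
      rw [h, grayNat, hj2]
    have := congrArg (· ^^^ (j / 2)) h3
    simpa [Nat.xor_assoc] using this

lemma grayNat_inj {j j' : ℕ} (h : grayNat j = grayNat j') : j = j' :=
  grayNat_injAux (j + j') j j' le_rfl h

lemma xor_succ : ∀ j : ℕ, ∃ s, j ^^^ (j + 1) = 2 ^ (s + 1) - 1 := by
  intro j
  induction j using Nat.strong_induction_on with
  | _ j ih =>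
    rcases Nat.even_or_odd j with ⟨a, ha⟩ | ⟨a, ha⟩
    · refine ⟨0, ?_⟩
      apply Nat.eq_of_testBit_eq; intro i
      cases i with
      | zero => simp [Nat.testBit_xor, Nat.testBit_zero]; omega
      | succ i =>
        rw [Nat.testBit_xor, Nat.testBit_add_one, Nat.testBit_add_one,
          show j / 2 = a by omega, show (j+1) / 2 = a by omega]
        simp [Nat.testBit_add_one, Nat.testBit_two_pow_sub_one]
    · rcases ha with rfl -- j = 2*a+1
      obtain ⟨s, hs⟩ := ih a (by omega)
      refine ⟨s + 1, ?_⟩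
      apply Nat.eq_of_testBit_eq; intro i
      cases i with
      | zero => simp [Nat.testBit_xor, Nat.testBit_zero, Nat.testBit_two_pow_sub_one]; omega
      | succ i =>
        rw [Nat.testBit_xor, Nat.testBit_add_one, Nat.testBit_add_one,
          show (2*a+1) / 2 = a by omega, show (2*a+1+1) / 2 = a + 1 by omega,
          ← Nat.testBit_xor, hs, Nat.testBit_two_pow_sub_one,
          Nat.testBit_two_pow_sub_one]
        congr 1
        simp only [eq_iff_iff]
        omega

lemma grayNat_step (j : ℕ) : ∃ s, grayNat j ^^^ grayNat (j + 1) = 2 ^ s := by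
  obtain ⟨s, hs⟩ := xor_succ j
  refine ⟨s, ?_⟩
  rw [grayNat_xor, hs]
  have h2 : (2 ^ (s+1) - 1) / 2 = 2 ^ s - 1 := by
    have : 2 ^ (s+1) = 2 * 2 ^ s := by ring
    omega
  rw [grayNat, h2]
  apply Nat.eq_of_testBit_eq; intro i
  rw [Nat.testBit_xor, Nat.testBit_two_pow_sub_one, Nat.testBit_two_pow_sub_one,
    Nat.testBit_two_pow]
  by_cases h1 : i < s <;> by_cases h2 : i < s + 1 <;> simp [h1, h2] <;> omega

/-- Insert a `0` bit at position `p` into `x`. -/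
def insBit (p x : ℕ) : ℕ := x % 2 ^ p ||| (x >>> p) <<< (p + 1)

/-- The position that bit `d` of `x` lands in inside `insBit p x`. -/
def embPos (p d : ℕ) : ℕ := if d < p then d else d + 1

lemma testBit_insBit (p x i : ℕ) :
    (insBit p x).testBit i =
      if i < p then x.testBit i else if i = p then false else x.testBit (i - 1) := by
  rw [insBit, Nat.testBit_or, Nat.testBit_mod_two_pow, Nat.testBit_shiftLeft,
    Nat.testBit_shiftRight]
  rcases lt_trichotomy i p with h | h | h
  · simp [h, show ¬ (i ≥ p + 1) by omega]
  · subst h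
    simp [show ¬ (i ≥ i + 1) by omega]
  · rw [if_neg (by omega), if_neg (by omega),
      show p + (i - (p + 1)) = i - 1 by omega]
    simp [show i ≥ p + 1 by omega, show ¬ i < p by omega]

lemma insBit_testBit_embPos (p x d : ℕ) :
    (insBit p x).testBit (embPos p d) = x.testBit d := by
  rw [testBit_insBit, embPos]
  by_cases h : d < p
  · simp [h]
  · rw [if_neg h, if_neg (by omega), if_neg (by omega)]
    simp

lemma insBit_xor (p x y : ℕ) : insBit p x ^^^ insBit p y = insBit p (x ^^^ y) := by
  apply Nat.eq_of_testBit_eq; intro i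
  rw [Nat.testBit_xor, testBit_insBit, testBit_insBit, testBit_insBit]
  split_ifs <;> simp [Nat.testBit_xor]

lemma insBit_two_pow (p d : ℕ) : insBit p (2 ^ d) = 2 ^ embPos p d := by
  apply Nat.eq_of_testBit_eq; intro i
  rw [testBit_insBit, Nat.testBit_two_pow, embPos]
  split_ifs with h1 h2 h3 <;> simp only [Nat.testBit_two_pow] <;>
    first
      | rfl
      | (apply Eq.symm; simp only [decide_eq_false_iff_not]; omega)
      | (simp only [decide_eq_decide]; omega)

lemma insBit_zero (p : ℕ) : insBit p 0 = 0 := by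
  apply Nat.eq_of_testBit_eq; intro i
  rw [testBit_insBit]
  split_ifs <;> simp

lemma insBit_testBit_self (p x : ℕ) : (insBit p x).testBit p = false := by
  rw [testBit_insBit]; simp

lemma insBit_inj {p x y : ℕ} (h : insBit p x = insBit p y) : x = y := by
  apply Nat.eq_of_testBit_eq; intro i
  have := congrArg (Nat.testBit · (embPos p i)) h
  simpa [insBit_testBit_embPos] using this

lemma insBit_lt {n p x : ℕ} (hp : p < n) (hx : x < 2 ^ (n - 1)) :
    insBit p x < 2 ^ n := by
  apply Nat.lt_pow_two_of_testBit
  intro i hi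
  rw [testBit_insBit, if_neg (by omega), if_neg (by omega)]
  exact Nat.testBit_lt_two_pow (lt_of_lt_of_le hx (Nat.pow_le_pow_right (by norm_num) (by omega)))

open SimpleGraph

def walkOfFun {V : Type*} (G : SimpleGraph V) (f : ℕ → V) :
    ∀ (L a : ℕ), (∀ j, j < L → G.Adj (f (a + j)) (f (a + j + 1))) → G.Walk (f a) (f (a + L))
  | 0, a, _ => Walk.nil.copy rfl (by rw [Nat.add_zero])
  | L + 1, a, h =>
    Walk.cons (by simpa using h 0 (Nat.succ_pos L))
      ((walkOfFun G f L (a + 1) (fun j hj => by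
          have h2 := h (j + 1) (by omega)
          have e1 : a + (j + 1) = a + 1 + j := by omega
          rwa [e1] at h2)).copy rfl (by congr 1; omega))

lemma walkOfFun_length {V : Type*} (G : SimpleGraph V) (f : ℕ → V) :
    ∀ (L a : ℕ) (h : ∀ j, j < L → G.Adj (f (a + j)) (f (a + j + 1))),
      (walkOfFun G f L a h).length = L := by
  intro L
  induction L with
  | zero => intro a h; simp [walkOfFun]
  | succ L ih => intro a h; rw [walkOfFun]; simp [ih]

lemma walkOfFun_support {V : Type*} (G : SimpleGraph V) (f : ℕ → V) :
    ∀ (L a : ℕ) (h : ∀ j, j < L → G.Adj (f (a + j)) (f (a + j + 1))),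
      (walkOfFun G f L a h).support = (List.range (L + 1)).map (fun j => f (a + j)) := by
  intro L
  induction L with
  | zero => intro a h; simp [walkOfFun, List.range_succ]
  | succ L ih =>
    intro a h
    rw [walkOfFun]
    simp only [Walk.support_cons, Walk.support_copy, ih]
    rw [List.range_succ_eq_map (n := L + 1), List.map_cons, List.map_map, Nat.add_zero]
    congr 1
    apply List.map_congr_left
    intro j hj
    show f (a + 1 + j) = f (a + Nat.succ j)
    rw [show a + 1 + j = a + Nat.succ j from by omega]

lemma walkOfFun_edges {V : Type*} (G : SimpleGraph V) (f : ℕ → V) :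
    ∀ (L a : ℕ) (h : ∀ j, j < L → G.Adj (f (a + j)) (f (a + j + 1))),
      (walkOfFun G f L a h).edges = (List.range L).map (fun j => s(f (a + j), f (a + j + 1))) := by
  intro L
  induction L with
  | zero => intro a h; simp [walkOfFun]
  | succ L ih =>
    intro a h
    rw [walkOfFun]
    simp only [Walk.edges_cons, Walk.edges_copy, ih]
    rw [List.range_succ_eq_map (n := L), List.map_cons, List.map_map, Nat.add_zero]
    congr 1
    apply List.map_congr_left
    intro j hj
    show s(f (a + 1 + j), f (a + 1 + j + 1)) = s(f (a + Nat.succ j), f (a + Nat.succ j + 1))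
    rw [show a + 1 + j = a + Nat.succ j from by omega]

lemma cycleOfFun {V : Type*} (G : SimpleGraph V) (f : ℕ → V) (L : ℕ) (hL : 3 ≤ L)
    (hadj : ∀ j, j + 1 < L → G.Adj (f j) (f (j + 1)))
    (hcl : G.Adj (f (L - 1)) (f 0))
    (hinj : ∀ j j', j < L → j' < L → f j = f j' → j = j') :
    ∃ (v : V) (c : G.Walk v v), c.IsCycle ∧ c.length = L ∧ s(f (L - 1), f 0) ∈ c.edges := by
  classical
  have hadj' : ∀ j, j < L - 1 → G.Adj (f (0 + j)) (f (0 + j + 1)) := by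
    intro j hj
    simpa using hadj j (by omega)
  let p := (walkOfFun G f (L - 1) 0 hadj').copy rfl (by rw [Nat.zero_add])
  refine ⟨f (L - 1), Walk.cons hcl p, ?_, ?_, ?_⟩
  · rw [Walk.cons_isCycle_iff]
    constructor
    · rw [Walk.isPath_def]
      show ((walkOfFun G f (L - 1) 0 hadj').copy rfl _).support.Nodup
      rw [Walk.support_copy, walkOfFun_support]
      apply List.Nodup.map_on _ List.nodup_range
      intro x hx y hy hxy
      rw [List.mem_range] at hx hy
      exact hinj x y (by omega) (by omega) (by simpa using hxy)
    · intro hmem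
      show False
      rw [show (p : G.Walk (f 0) (f (L-1))).edges = (walkOfFun G f (L - 1) 0 hadj').edges from
        Walk.edges_copy _ _ _, walkOfFun_edges] at hmem
      rw [List.mem_map] at hmem
      obtain ⟨j, hj, hje⟩ := hmem
      rw [List.mem_range] at hj
      rw [Sym2.eq_iff] at hje
      rcases hje with ⟨h1, h2⟩ | ⟨h1, h2⟩
      · have := hinj _ _ (by omega) (by omega) h1.symm
        omega
      · have e1 := hinj _ _ (by omega) (by omega) h1.symm
        have e2 := hinj _ _ (by omega) (by omega) h2.symm
        omega
  · show (Walk.cons hcl p).length = L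
    rw [Walk.length_cons]
    show ((walkOfFun G f (L - 1) 0 hadj').copy rfl _).length + 1 = L
    rw [Walk.length_copy, walkOfFun_length]
    omega
  · rw [Walk.edges_cons]
    exact List.mem_cons_self


/-- Vertex builder: XOR the base vertex `u` with the bits of `z`. -/
def vtx {n : ℕ} (u : Fin n → Bool) (z : ℕ) : Fin n → Bool :=
  fun i => (u i).xor (z.testBit i.val)

lemma bool_xor_ne_iff (a b c : Bool) : a.xor b ≠ a.xor c ↔ b ≠ c := by
  cases a <;> cases b <;> cases c <;> simp

lemma xor_xor_cancel (x y c : ℕ) : (x ^^^ c) ^^^ (y ^^^ c) = x ^^^ y := by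
  apply Nat.eq_of_testBit_eq; intro i
  simp only [Nat.testBit_xor]
  cases x.testBit i <;> cases y.testBit i <;> cases c.testBit i <;> rfl

lemma vtx_adj {n : ℕ} (u : Fin n → Bool) {z z' q : ℕ} (hq : q < n) (h : z ^^^ z' = 2 ^ q) :
    (hypercube n).Adj (vtx u z) (vtx u z') := by
  have key : ∀ i : Fin n, (vtx u z i ≠ vtx u z' i) ↔ i = ⟨q, hq⟩ := by
    intro i
    rw [vtx, vtx, bool_xor_ne_iff]
    constructor
    · intro hbit
      have h1 : (z ^^^ z').testBit i.val = true := by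
        rw [Nat.testBit_xor]
        cases hz : z.testBit i.val <;> cases hz' : z'.testBit i.val <;>
          simp_all
      rw [h, Nat.testBit_two_pow] at h1
      have : q = i.val := of_decide_eq_true h1
      exact Fin.ext this.symm
    · rintro rfl
      have h1 : (z ^^^ z').testBit q = true := by
        rw [h]; exact Nat.testBit_two_pow_self
      rw [Nat.testBit_xor] at h1
      intro hc
      rw [hc] at h1
      simp at h1
  exact ⟨⟨q, hq⟩, (key _).2 rfl, fun i hi => (key i).1 hi⟩

lemma vtx_inj {n : ℕ} (u : Fin n → Bool) {z z' : ℕ} (hz : z < 2 ^ n) (hz' : z' < 2 ^ n)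
    (h : vtx u z = vtx u z') : z = z' := by
  apply Nat.eq_of_testBit_eq; intro i
  by_cases hi : i < n
  · have h2 := congrFun h ⟨i, hi⟩
    rw [vtx, vtx] at h2
    cases u ⟨i, hi⟩ <;> simpa using h2
  · have e1 : z < 2 ^ i := lt_of_lt_of_le hz (Nat.pow_le_pow_right (by norm_num) (by omega))
    have e2 : z' < 2 ^ i := lt_of_lt_of_le hz' (Nat.pow_le_pow_right (by norm_num) (by omega))
    rw [Nat.testBit_lt_two_pow e1, Nat.testBit_lt_two_pow e2]

/-- The cycle's bitmask sequence. -/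
def Mfun (p m j : ℕ) : ℕ :=
  if j < m then insBit p (grayNat j) else insBit p (grayNat (2 * m - 1 - j)) ^^^ 2 ^ p


/-- Every edge of `Q_n` (`n ≥ 2`) lies on a cycle of every even length `l` with
`4 ≤ l ≤ 2^n`. -/
theorem stmt9 (n : ℕ) (hn : 2 ≤ n) :
    ∀ e ∈ (hypercube n).edgeSet, ∀ l : ℕ, Even l → 4 ≤ l → l ≤ 2 ^ n →
      EdgeOnCycle (hypercube n) e l := by
  intro e he l hev h4 hln
  induction e using Sym2.ind with
  | _ u v =>
  rw [SimpleGraph.mem_edgeSet] at he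
  obtain ⟨i0, hne, huni⟩ := he
  obtain ⟨m, hm⟩ := hev
  have hpow : 2 ^ n = 2 * 2 ^ (n - 1) := by
    rw [← pow_succ']
    congr 1
    omega
  have hm2 : 2 ≤ m := by omega
  have hmle : m ≤ 2 ^ (n - 1) := by omega
  set p := (i0 : ℕ) with hp
  have hpn : p < n := i0.isLt
  set f : ℕ → (Fin n → Bool) := fun j => vtx u (Mfun p m j) with hf
  have hMlt : ∀ j, j < 2 * m → Mfun p m j < 2 ^ n := by
    intro j hj
    rw [Mfun]
    split_ifs with h1
    · exact insBit_lt hpn (grayNat_lt (by omega))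
    · exact Nat.xor_lt_two_pow (insBit_lt hpn (grayNat_lt (by omega)))
        (Nat.pow_lt_pow_right (by norm_num) hpn)
  have hstep : ∀ a, a + 1 < m →
      ∃ q, q < n ∧ insBit p (grayNat a) ^^^ insBit p (grayNat (a + 1)) = 2 ^ q := by
    intro a ha
    obtain ⟨s, hs⟩ := grayNat_step a
    have h2s : (2 : ℕ) ^ s < 2 ^ (n - 1) := by
      rw [← hs]
      exact Nat.xor_lt_two_pow (grayNat_lt (by omega)) (grayNat_lt (by omega))
    have hsn : s < n - 1 := by
      by_contra hc
      push_neg at hc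
      exact absurd h2s (not_lt.2 (Nat.pow_le_pow_right (by norm_num) hc))
    refine ⟨embPos p s, ?_, ?_⟩
    · rw [embPos]; split_ifs <;> omega
    · rw [insBit_xor, hs, insBit_two_pow]
  have hadj : ∀ j, j + 1 < 2 * m → (hypercube n).Adj (f j) (f (j + 1)) := by
    intro j hj
    by_cases hc1 : j + 1 < m
    · obtain ⟨q, hq, hx⟩ := hstep j hc1
      have hMeq : Mfun p m j ^^^ Mfun p m (j + 1) = 2 ^ q := by
        rw [Mfun, Mfun, if_pos (by omega), if_pos hc1]
        exact hx
      exact vtx_adj u hq hMeq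
    · by_cases hc2 : j + 1 = m
      · have hMeq : Mfun p m j ^^^ Mfun p m (j + 1) = 2 ^ p := by
          rw [Mfun, Mfun, if_pos (by omega), if_neg (by omega),
            show 2 * m - 1 - (j + 1) = j by omega, ← Nat.xor_assoc, Nat.xor_self, Nat.zero_xor]
        exact vtx_adj u hpn hMeq
      · obtain ⟨q, hq, hx⟩ := hstep (2 * m - 1 - (j + 1)) (by omega)
        have hMeq : Mfun p m j ^^^ Mfun p m (j + 1) = 2 ^ q := by
          rw [Mfun, Mfun, if_neg (by omega), if_neg (by omega),
            show 2 * m - 1 - j = (2 * m - 1 - (j + 1)) + 1 by omega, xor_xor_cancel,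
            Nat.xor_comm]
          exact hx
        exact vtx_adj u hq hMeq
  have hgray0 : grayNat 0 = 0 := rfl
  have hM0 : Mfun p m 0 = 0 := by
    rw [Mfun, if_pos (by omega), hgray0, insBit_zero]
  have hMlast : Mfun p m (2 * m - 1) = 2 ^ p := by
    rw [Mfun, if_neg (by omega), show 2 * m - 1 - (2 * m - 1) = 0 by omega, hgray0,
      insBit_zero, Nat.zero_xor]
  have hcl : (hypercube n).Adj (f (2 * m - 1)) (f 0) := by
    apply vtx_adj u hpn
    rw [hM0, hMlast, Nat.xor_zero]
  have hinj : ∀ j j', j < 2 * m → j' < 2 * m → f j = f j' → j = j' := by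
    intro j j' hj hj' hfe
    have hM : Mfun p m j = Mfun p m j' := vtx_inj u (hMlt _ hj) (hMlt _ hj') hfe
    have hbit : ∀ a b : ℕ, insBit p (grayNat a) = insBit p (grayNat b) ^^^ 2 ^ p → False := by
      intro a b hab
      have h1 := congrArg (Nat.testBit · p) hab
      simp only [Nat.testBit_xor, insBit_testBit_self, Nat.testBit_two_pow_self] at h1
      simp at h1
    by_cases c1 : j < m <;> by_cases c2 : j' < m
    · rw [Mfun, Mfun, if_pos c1, if_pos c2] at hM
      exact grayNat_inj (insBit_inj hM)
    · exact absurd (by rw [Mfun, Mfun, if_pos c1, if_neg c2] at hM; exact hM) (hbit _ _ ·)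
    · exact absurd (by rw [Mfun, Mfun, if_neg c1, if_pos c2] at hM; exact hM.symm) (hbit _ _ ·)
    · rw [Mfun, Mfun, if_neg c1, if_neg c2] at hM
      have h2 := congrArg (· ^^^ 2 ^ p) hM
      simp only [Nat.xor_assoc, Nat.xor_self, Nat.xor_zero] at h2
      have := grayNat_inj (insBit_inj h2)
      omega
  obtain ⟨v0, c, hcyc, hlen, hedge⟩ :=
    cycleOfFun (hypercube n) f (2 * m) (by omega) hadj hcl hinj
  have hf0 : f 0 = u := by
    funext i
    rw [hf]
    show (u i).xor ((Mfun p m 0).testBit i.val) = u i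
    rw [hM0]
    simp [Nat.zero_testBit]
  have hfv : f (2 * m - 1) = v := by
    funext i
    rw [hf]
    show (u i).xor ((Mfun p m (2 * m - 1)).testBit i.val) = v i
    rw [hMlast, Nat.testBit_two_pow]
    by_cases hi : i = i0
    · rw [decide_eq_true (by rw [hp, hi])]
      have hne' : u i ≠ v i := by rw [hi]; exact hne
      revert hne'
      cases hu : u i <;> cases hv : v i <;> simp
    · have huv : u i = v i := by
        by_contra hc
        exact hi (huni i hc)
      rw [decide_eq_false (by rw [hp]; exact fun hc => hi (Fin.ext hc.symm))]
      simpa using huv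
  rw [hf0, hfv] at hedge
  refine ⟨v0, c, hcyc, by omega, ?_⟩
  rw [Sym2.eq_swap]
  exact hedge
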